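/- There is a constant C > 0 such that for all k ≥ 1 and all integers d ≥ 0, the number of permutations σ of {1,...,k} with degree d(σ) = d is at most (C k)^d. -/

import Mathlib

open scoped Classical

/-- The extension `σ̃` of a permutation `σ` of `{1,…,k}` to `ℕ`, fixing `0` and every `j > k`. -/
def extPerm (k : ℕ) (σ : Equiv.Perm (Fin k)) (j : ℕ) : ℕ :=
  if h : 1 ≤ j ∧ j ≤ k then (σ ⟨j - 1, by omega⟩).val + 1 else j

/-- The inverse extension `σ̃⁻¹`. -/
def extPermInv (k : ℕ) (σ : Equiv.Perm (Fin k)) (i : ℕ) : ℕ :=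
  if h : 1 ≤ i ∧ i ≤ k then (σ⁻¹ ⟨i - 1, by omega⟩).val + 1 else i

/-- The point `(j, σ̃(j))`, `1 ≤ j ≤ k`, is a peak: `σ̃(j-1) > σ̃(j) < σ̃(j+1)`. -/
def IsPeakPt (k : ℕ) (σ : Equiv.Perm (Fin k)) (j : ℕ) : Prop :=
  1 ≤ j ∧ j ≤ k ∧ extPerm k σ j < extPerm k σ (j - 1) ∧ extPerm k σ j < extPerm k σ (j + 1)

/-- The point `(j, σ̃(j))`, `1 ≤ j ≤ k`, is a valley: `σ̃(j-1) < σ̃(j) > σ̃(j+1)`. -/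
def IsValleyPt (k : ℕ) (σ : Equiv.Perm (Fin k)) (j : ℕ) : Prop :=
  1 ≤ j ∧ j ≤ k ∧ extPerm k σ (j - 1) < extPerm k σ j ∧ extPerm k σ (j + 1) < extPerm k σ j

/-- `i` is a peak index: `(σ̃⁻¹(i), i)` is a peak. -/
def IsPeakIdx (k : ℕ) (σ : Equiv.Perm (Fin k)) (i : ℕ) : Prop :=
  IsPeakPt k σ (extPermInv k σ i)

/-- `i` is a valley index: `(σ̃⁻¹(i), i)` is a valley; additionally `i = k+1` is a valley index. -/
def IsValleyIdx (k : ℕ) (σ : Equiv.Perm (Fin k)) (i : ℕ) : Prop :=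
  i = k + 1 ∨ IsValleyPt k σ (extPermInv k σ i)

/-- `i` is a slope index: `1 ≤ i ≤ k` and `(σ̃⁻¹(i), i)` is neither a peak nor a valley. -/
def IsSlopeIdx (k : ℕ) (σ : Equiv.Perm (Fin k)) (i : ℕ) : Prop :=
  1 ≤ i ∧ i ≤ k ∧ ¬ IsPeakPt k σ (extPermInv k σ i) ∧ ¬ IsValleyPt k σ (extPermInv k σ i)

/-- `i` is a ladder index: it is a valley or slope index and `|σ̃⁻¹(i) - σ̃⁻¹(i-1)| = 1`. -/
def IsLadderIdx (k : ℕ) (σ : Equiv.Perm (Fin k)) (i : ℕ) : Prop :=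
  (IsValleyIdx k σ i ∨ IsSlopeIdx k σ i) ∧
    ((extPermInv k σ i : ℤ) - (extPermInv k σ (i - 1) : ℤ)).natAbs = 1

/-- `ℓ(σ)`: the number of ladder indices in `{1,…,k+1}`. -/
noncomputable def ladderCount (k : ℕ) (σ : Equiv.Perm (Fin k)) : ℕ :=
  ((Finset.Icc 1 (k + 1)).filter fun i => IsLadderIdx k σ i).card

/-- The degree `d(σ) = k + 1 - ℓ(σ)`. -/
noncomputable def degree (k : ℕ) (σ : Equiv.Perm (Fin k)) : ℕ :=
  k + 1 - ladderCount k σ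
namespace DegAux

lemma extPerm_extPermInv (k : ℕ) (σ : Equiv.Perm (Fin k)) (i : ℕ) :
    extPerm k σ (extPermInv k σ i) = i := by
  unfold extPerm extPermInv
  by_cases h : 1 ≤ i ∧ i ≤ k
  · rw [dif_pos h]
    have hb : (σ⁻¹ ⟨i - 1, by omega⟩).val < k := (σ⁻¹ ⟨i - 1, by omega⟩).isLt
    rw [dif_pos (by omega)]
    have : (⟨(σ⁻¹ ⟨i - 1, by omega⟩).val + 1 - 1, by omega⟩ : Fin k) = σ⁻¹ ⟨i - 1, by omega⟩ := by
      apply Fin.ext; simp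
    rw [this]
    simp [Equiv.apply_symm_apply]
    omega
  · rw [dif_neg h, dif_neg h]

lemma extPermInv_extPerm (k : ℕ) (σ : Equiv.Perm (Fin k)) (j : ℕ) :
    extPermInv k σ (extPerm k σ j) = j := by
  unfold extPerm extPermInv
  by_cases h : 1 ≤ j ∧ j ≤ k
  · rw [dif_pos h]
    have hb : (σ ⟨j - 1, by omega⟩).val < k := (σ ⟨j - 1, by omega⟩).isLt
    rw [dif_pos (by omega)]
    have : (⟨(σ ⟨j - 1, by omega⟩).val + 1 - 1, by omega⟩ : Fin k) = σ ⟨j - 1, by omega⟩ := by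
      apply Fin.ext; simp
    rw [this]
    simp [Equiv.symm_apply_apply]
    omega
  · rw [dif_neg h, dif_neg h]

lemma einv_inj (k : ℕ) (σ : Equiv.Perm (Fin k)) : Function.Injective (extPermInv k σ) := by
  intro a b h
  have := congrArg (extPerm k σ) h
  rwa [extPerm_extPermInv, extPerm_extPermInv] at this

lemma einv_zero (k : ℕ) (σ : Equiv.Perm (Fin k)) : extPermInv k σ 0 = 0 := by
  unfold extPermInv; rw [dif_neg (by omega)]

lemma einv_le (k : ℕ) (σ : Equiv.Perm (Fin k)) {j : ℕ} (hj : j ≤ k + 1) :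
    extPermInv k σ j ≤ k + 1 := by
  unfold extPermInv
  by_cases h : 1 ≤ j ∧ j ≤ k
  · rw [dif_pos h]
    have := (σ⁻¹ ⟨j - 1, by omega⟩).isLt
    omega
  · rw [dif_neg h]; omega

lemma eperm_le (k : ℕ) (σ : Equiv.Perm (Fin k)) {j : ℕ} (hj : j ≤ k + 1) :
    extPerm k σ j ≤ k + 1 := by
  unfold extPerm
  by_cases h : 1 ≤ j ∧ j ≤ k
  · rw [dif_pos h]
    have := (σ ⟨j - 1, by omega⟩).isLt
    omega
  · rw [dif_neg h]; omega

lemma einv_eq_zero_iff (k : ℕ) (σ : Equiv.Perm (Fin k)) {j : ℕ} :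
    extPermInv k σ j = 0 ↔ j = 0 := by
  constructor
  · intro h; exact einv_inj k σ (h.trans (einv_zero k σ).symm)
  · intro h; rw [h, einv_zero]

end DegAux
namespace DegAux

noncomputable def bps (k : ℕ) (σ : Equiv.Perm (Fin k)) : Finset ℕ :=
  (Finset.Icc 1 (k+1)).filter (fun i => ¬ IsLadderIdx k σ i)

lemma bps_subset (k : ℕ) (σ : Equiv.Perm (Fin k)) : bps k σ ⊆ Finset.Icc 1 (k+1) :=
  Finset.filter_subset _ _

lemma zero_not_mem_bps (k : ℕ) (σ : Equiv.Perm (Fin k)) : 0 ∉ bps k σ := by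
  intro h; have := bps_subset k σ h; simp at this

lemma card_bps (k : ℕ) (σ : Equiv.Perm (Fin k)) : (bps k σ).card = degree k σ := by
  have h1 := Finset.card_filter_add_card_filter_not
    (s := Finset.Icc 1 (k+1)) (p := fun i => IsLadderIdx k σ i)
  have h2 : (Finset.Icc 1 (k+1)).card = k + 1 := by simp
  unfold degree ladderCount bps
  simp only [h2] at h1 ⊢
  omega

noncomputable def nxt (k : ℕ) (σ : Equiv.Perm (Fin k)) (x : ℕ) : ℕ :=
  if h : ((bps k σ).filter (fun y => x < y)).Nonempty
    then ((bps k σ).filter (fun y => x < y)).min' h else k + 2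

lemma lt_nxt (k : ℕ) (σ : Equiv.Perm (Fin k)) {x : ℕ} (hx : x ≤ k + 1) : x < nxt k σ x := by
  unfold nxt
  split
  · next h =>
      have := Finset.min'_mem _ h
      simp only [Finset.mem_filter] at this
      exact this.2
  · omega

lemma nxt_le (k : ℕ) (σ : Equiv.Perm (Fin k)) (x : ℕ) : nxt k σ x ≤ k + 2 := by
  unfold nxt
  split
  · next h =>
      have := Finset.min'_mem _ h
      simp only [Finset.mem_filter] at this
      have := bps_subset k σ this.1
      simp only [Finset.mem_Icc] at this
      omega
  · omega

lemma not_bp_between (k : ℕ) (σ : Equiv.Perm (Fin k)) {x j : ℕ} (h1 : x < j)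
    (h2 : j < nxt k σ x) : j ∉ bps k σ := by
  intro hj
  have hmem : j ∈ (bps k σ).filter (fun y => x < y) := Finset.mem_filter.2 ⟨hj, h1⟩
  have hne : ((bps k σ).filter (fun y => x < y)).Nonempty := ⟨j, hmem⟩
  have := Finset.min'_le _ j hmem
  unfold nxt at h2
  rw [dif_pos hne] at h2
  omega

lemma ladder_between (k : ℕ) (σ : Equiv.Perm (Fin k)) {x j : ℕ} (h1 : x < j)
    (h2 : j < nxt k σ x) (h3 : j ≤ k + 1) : IsLadderIdx k σ j := by
  have := not_bp_between k σ h1 h2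
  unfold bps at this
  simp only [Finset.mem_filter, Finset.mem_Icc, not_and, not_not] at this
  exact this ⟨by omega, h3⟩

noncomputable def segOf (k : ℕ) (σ : Equiv.Perm (Fin k)) (j : ℕ) : ℕ :=
  ((insert 0 (bps k σ)).filter (fun x => x ≤ j)).max' ⟨0, by simp⟩

lemma segOf_le (k : ℕ) (σ : Equiv.Perm (Fin k)) (j : ℕ) : segOf k σ j ≤ j := by
  have := Finset.max'_mem ((insert 0 (bps k σ)).filter (fun x => x ≤ j)) ⟨0, by simp⟩
  simp only [Finset.mem_filter] at this
  exact this.2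

lemma segOf_mem (k : ℕ) (σ : Equiv.Perm (Fin k)) (j : ℕ) :
    segOf k σ j ∈ insert 0 (bps k σ) := by
  have := Finset.max'_mem ((insert 0 (bps k σ)).filter (fun x => x ≤ j)) ⟨0, by simp⟩
  simp only [Finset.mem_filter] at this
  exact this.1

lemma segOf_le_k1 (k : ℕ) (σ : Equiv.Perm (Fin k)) (j : ℕ) : segOf k σ j ≤ k + 1 := by
  have := segOf_mem k σ j
  simp only [Finset.mem_insert] at this
  rcases this with h | h
  · omega
  · have := bps_subset k σ h; simp only [Finset.mem_Icc] at this; omega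

lemma le_segOf (k : ℕ) (σ : Equiv.Perm (Fin k)) {x j : ℕ} (hx : x ∈ insert 0 (bps k σ))
    (h1 : x ≤ j) : x ≤ segOf k σ j := by
  unfold segOf
  apply Finset.le_max'
  exact Finset.mem_filter.2 ⟨hx, h1⟩

lemma lt_nxt_segOf (k : ℕ) (σ : Equiv.Perm (Fin k)) {j : ℕ} (hj : j ≤ k + 1) :
    j < nxt k σ (segOf k σ j) := by
  by_contra hcon
  push_neg at hcon
  unfold nxt at hcon
  split at hcon
  · next h =>
      have hm := Finset.min'_mem _ h
      simp only [Finset.mem_filter] at hm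
      have hle := le_segOf k σ (Finset.mem_insert_of_mem hm.1) hcon
      omega
  · omega

lemma segOf_eq (k : ℕ) (σ : Equiv.Perm (Fin k)) {x j : ℕ} (hx : x ∈ insert 0 (bps k σ))
    (h1 : x ≤ j) (h2 : j < nxt k σ x) : segOf k σ j = x := by
  have hge : x ≤ segOf k σ j := le_segOf k σ hx h1
  rcases Nat.eq_or_lt_of_le hge with h | h
  · omega
  · exfalso
    have hmem := segOf_mem k σ j
    simp only [Finset.mem_insert] at hmem
    rcases hmem with h0 | hbp
    · omega
    · have hmem : segOf k σ j ∈ (bps k σ).filter (fun y => x < y) := Finset.mem_filter.2 ⟨hbp, h⟩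
      have hne : ((bps k σ).filter (fun y => x < y)).Nonempty := ⟨segOf k σ j, hmem⟩
      have := Finset.min'_le _ (segOf k σ j) hmem
      unfold nxt at h2
      rw [dif_pos hne] at h2
      have := segOf_le k σ j
      omega

end DegAux
namespace DegAux

lemma run_aux (f : ℕ → ℕ) (hinj : Function.Injective f) (a b : ℕ)
    (hstep : ∀ j, a < j → j ≤ b → ((f j : ℤ) - (f (j-1) : ℤ)).natAbs = 1)
    (hab : a < b) :
    ∀ n, a + n ≤ b → (f (a+n) : ℤ) = (f a : ℤ) + ((f (a+1) : ℤ) - (f a : ℤ)) * n := by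
  intro n
  induction n using Nat.strong_induction_on with
  | _ n ih =>
    match n with
    | 0 => intro _; simp
    | 1 => intro _; simp
    | (m+2) =>
      intro hle
      set s : ℤ := (f (a+1) : ℤ) - (f a : ℤ) with hs
      have hs1 : s.natAbs = 1 := by
        have := hstep (a+1) (by omega) (by omega)
        simpa using this
      have h1 : (f (a+m+1) : ℤ) = (f a : ℤ) + s * (m+1) := by
        have := ih (m+1) (by omega) (by omega)
        rw [show a + (m+1) = a + m + 1 by ring] at this
        push_cast at this ⊢
        linarith
      have h0 : (f (a+m) : ℤ) = (f a : ℤ) + s * m := by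
        have := ih m (by omega) (by omega)
        rw [show a + m = a + m by rfl] at this
        push_cast at this ⊢
        linarith
      have hst := hstep (a+m+2) (by omega) (by omega)
      rw [show a + m + 2 - 1 = a + m + 1 by omega] at hst
      set t : ℤ := (f (a+m+2) : ℤ) - (f (a+m+1) : ℤ) with ht
      have : t = 1 ∨ t = -1 := Int.natAbs_eq_iff.1 hst |>.imp (by simp) (by simp)
      have hss : s = 1 ∨ s = -1 := Int.natAbs_eq_iff.1 hs1 |>.imp (by simp) (by simp)
      have hts : t = s := by
        by_contra hne
        have htm : t = -s := by rcases this with h|h <;> rcases hss with h'|h' <;> omega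
        have : (f (a+m+2) : ℤ) = (f (a+m) : ℤ) := by
          rw [h0]
          have : (f (a+m+2) : ℤ) = (f (a+m+1) : ℤ) + t := by omega
          rw [this, h1, htm]; ring
        have := hinj (Nat.cast_injective this)
        omega
      have : (f (a+(m+2)) : ℤ) = (f (a+m+1) : ℤ) + t := by
        rw [show a + (m+2) = a+m+2 by ring]; omega
      rw [this, h1, hts]
      push_cast
      ring

lemma run (f : ℕ → ℕ) (hinj : Function.Injective f) (a b : ℕ) (hab : a ≤ b)
    (hstep : ∀ j, a < j → j ≤ b → ((f j : ℤ) - (f (j-1) : ℤ)).natAbs = 1) :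
    ∀ j, a ≤ j → j ≤ b →
      (f j : ℤ) = if f a ≤ f b then (f a : ℤ) + ((j:ℤ) - a) else (f a : ℤ) - ((j:ℤ) - a) := by
  intro j hj1 hj2
  rcases Nat.eq_or_lt_of_le hab with heq | hlt
  · subst heq
    have : j = a := by omega
    subst this
    rw [if_pos le_rfl]
    simp
  · set s : ℤ := (f (a+1) : ℤ) - (f a : ℤ) with hs
    have hs1 : s.natAbs = 1 := by
      have := hstep (a+1) (by omega) (by omega)
      simpa using this
    have hss : s = 1 ∨ s = -1 := Int.natAbs_eq_iff.1 hs1 |>.imp (by simp) (by simp)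
    have hrun := run_aux f hinj a b hstep hlt
    have hj : (f j : ℤ) = (f a : ℤ) + s * (j - a) := by
      have := hrun (j - a) (by omega)
      rw [show a + (j - a) = j by omega] at this
      rw [this]
      congr 1
      push_cast [Nat.cast_sub hj1]
      ring
    have hb : (f b : ℤ) = (f a : ℤ) + s * (b - a) := by
      have := hrun (b - a) (by omega)
      rw [show a + (b - a) = b by omega] at this
      rw [this]
      congr 1
      push_cast [Nat.cast_sub hab]
      ring
    rcases hss with h | h
    · rw [if_pos]
      · rw [hj, h]; ring
      · have : (f a : ℤ) ≤ (f b : ℤ) := by rw [hb, h]; push_cast; omega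
        exact_mod_cast this
    · rw [if_neg]
      · rw [hj, h]; ring
      · have : (f b : ℤ) < (f a : ℤ) := by
          rw [hb, h]
          have : (1:ℤ) ≤ ((b:ℤ) - a) := by push_cast [Nat.cast_sub hab]; omega
          nlinarith
        push_neg
        exact_mod_cast this

end DegAux
namespace DegAux

noncomputable def lastS (k : ℕ) (σ : Equiv.Perm (Fin k)) (x : ℕ) : ℕ := nxt k σ x - 1

noncomputable def lvalS (k : ℕ) (σ : Equiv.Perm (Fin k)) (x : ℕ) : ℕ :=
  min (extPermInv k σ x) (extPermInv k σ (lastS k σ x))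

noncomputable def upB (k : ℕ) (σ : Equiv.Perm (Fin k)) (x : ℕ) : Bool :=
  decide (extPermInv k σ x < extPermInv k σ (lastS k σ x))

lemma mem_B0_le (k : ℕ) (σ : Equiv.Perm (Fin k)) {x : ℕ} (hx : x ∈ insert 0 (bps k σ)) :
    x ≤ k + 1 := by
  simp only [Finset.mem_insert] at hx
  rcases hx with h | h
  · omega
  · have := bps_subset k σ h; simp only [Finset.mem_Icc] at this; omega

lemma le_lastS (k : ℕ) (σ : Equiv.Perm (Fin k)) {x : ℕ} (hx : x ∈ insert 0 (bps k σ)) :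
    x ≤ lastS k σ x := by
  have := lt_nxt k σ (mem_B0_le k σ hx)
  unfold lastS; omega

lemma lastS_le (k : ℕ) (σ : Equiv.Perm (Fin k)) (x : ℕ) : lastS k σ x ≤ k + 1 := by
  have := nxt_le k σ x; unfold lastS; omega

lemma seg_run (k : ℕ) (σ : Equiv.Perm (Fin k)) {x : ℕ} (hx : x ∈ insert 0 (bps k σ)) :
    ∀ j, x ≤ j → j ≤ lastS k σ x →
      (extPermInv k σ j : ℤ) =
        if extPermInv k σ x ≤ extPermInv k σ (lastS k σ x)
          then (extPermInv k σ x : ℤ) + ((j:ℤ) - x)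
          else (extPermInv k σ x : ℤ) - ((j:ℤ) - x) := by
  apply run _ (einv_inj k σ) _ _ (le_lastS k σ hx)
  intro j h1 h2
  have hl : IsLadderIdx k σ j := by
    apply ladder_between k σ h1
    · unfold lastS at h2; omega
    · have := lastS_le k σ x; omega
  exact hl.2

lemma seg_fmla (k : ℕ) (σ : Equiv.Perm (Fin k)) {x : ℕ} (hx : x ∈ insert 0 (bps k σ)) :
    ∀ j, x ≤ j → j ≤ lastS k σ x →
      (extPermInv k σ j : ℤ) =
        if upB k σ x then (lvalS k σ x : ℤ) + ((j:ℤ) - x)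
          else (lvalS k σ x : ℤ) + ((lastS k σ x : ℤ) - j) := by
  intro j h1 h2
  have hr := seg_run k σ hx j h1 h2
  by_cases hc : extPermInv k σ x < extPermInv k σ (lastS k σ x)
  · rw [if_pos (by simpa [upB] using hc)]
    rw [if_pos (le_of_lt hc)] at hr
    have : lvalS k σ x = extPermInv k σ x := by unfold lvalS; omega
    rw [this]; exact hr
  · rw [if_neg (by simpa [upB] using hc)]
    push_neg at hc
    rcases Nat.eq_or_lt_of_le hc with heq | hlt
    · -- equal values: x = lastS x, so j = x
      have hxl : lastS k σ x = x := einv_inj k σ heq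
      have hjx : j = x := by omega
      have hmin : lvalS k σ x = extPermInv k σ x := by unfold lvalS; omega
      rw [hjx, hmin, hxl]
      push_cast; ring
    · rw [if_neg (by omega)] at hr
      have hlval : (lvalS k σ x : ℤ) = extPermInv k σ (lastS k σ x) := by
        unfold lvalS; push_cast; omega
      have hlast := seg_run k σ hx (lastS k σ x) (le_lastS k σ hx) le_rfl
      rw [if_neg (by omega)] at hlast
      rw [hr, hlval, hlast]
      ring

lemma seg_range (k : ℕ) (σ : Equiv.Perm (Fin k)) {x : ℕ} (hx : x ∈ insert 0 (bps k σ))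
    {j : ℕ} (h1 : x ≤ j) (h2 : j ≤ lastS k σ x) :
    lvalS k σ x ≤ extPermInv k σ j ∧
      (extPermInv k σ j : ℤ) ≤ (lvalS k σ x : ℤ) + ((lastS k σ x : ℤ) - x) := by
  have := seg_fmla k σ hx j h1 h2
  split at this <;>
  · constructor
    · have h3 : (lvalS k σ x : ℤ) ≤ (extPermInv k σ j : ℤ) := by rw [this]; push_cast; omega
      exact_mod_cast h3
    · rw [this]; push_cast; omega

lemma seg_attain (k : ℕ) (σ : Equiv.Perm (Fin k)) {x : ℕ} (hx : x ∈ insert 0 (bps k σ))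
    {y : ℕ} (h1 : lvalS k σ x ≤ y) (h2 : (y:ℤ) ≤ (lvalS k σ x : ℤ) + ((lastS k σ x : ℤ) - x)) :
    ∃ j, x ≤ j ∧ j ≤ lastS k σ x ∧ extPermInv k σ j = y := by
  have hxl := le_lastS k σ hx
  by_cases hc : upB k σ x
  · refine ⟨x + (y - lvalS k σ x), by omega, by omega, ?_⟩
    have := seg_fmla k σ hx (x + (y - lvalS k σ x)) (by omega) (by omega)
    rw [if_pos hc] at this
    have h3 : (extPermInv k σ (x + (y - lvalS k σ x)) : ℤ) = (y : ℤ) := by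
      rw [this]; push_cast [Nat.cast_sub h1]; ring
    exact_mod_cast h3
  · refine ⟨lastS k σ x - (y - lvalS k σ x), by omega, by omega, ?_⟩
    have := seg_fmla k σ hx (lastS k σ x - (y - lvalS k σ x)) (by omega) (by omega)
    rw [if_neg hc] at this
    have h3 : (extPermInv k σ (lastS k σ x - (y - lvalS k σ x)) : ℤ) = (y : ℤ) := by
      rw [this]
      have hy : y - lvalS k σ x ≤ lastS k σ x := by omega
      push_cast [Nat.cast_sub h1, Nat.cast_sub hy]
      ring
    exact_mod_cast h3

end DegAux
namespace DegAux

lemma seg_segOf (k : ℕ) (σ : Equiv.Perm (Fin k)) {x j : ℕ} (hx : x ∈ insert 0 (bps k σ))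
    (h1 : x ≤ j) (h2 : j ≤ lastS k σ x) : segOf k σ j = x := by
  apply segOf_eq k σ hx h1
  have := lt_nxt k σ (mem_B0_le k σ hx)
  unfold lastS at h2
  omega

lemma lval_attained (k : ℕ) (σ : Equiv.Perm (Fin k)) {x : ℕ} (hx : x ∈ insert 0 (bps k σ)) :
    ∃ m, x ≤ m ∧ m ≤ lastS k σ x ∧ extPermInv k σ m = lvalS k σ x := by
  have hxl := le_lastS k σ hx
  by_cases hc : extPermInv k σ x ≤ extPermInv k σ (lastS k σ x)
  · exact ⟨x, le_rfl, hxl, by unfold lvalS; omega⟩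
  · exact ⟨lastS k σ x, hxl, le_rfl, by unfold lvalS; omega⟩

lemma lval_inj (k : ℕ) (σ : Equiv.Perm (Fin k)) {x x' : ℕ} (hx : x ∈ insert 0 (bps k σ))
    (hx' : x' ∈ insert 0 (bps k σ)) (h : lvalS k σ x = lvalS k σ x') : x = x' := by
  obtain ⟨m, hm1, hm2, hm3⟩ := lval_attained k σ hx
  obtain ⟨m', hm1', hm2', hm3'⟩ := lval_attained k σ hx'
  have : m = m' := einv_inj k σ (by rw [hm3, hm3', h])
  have e1 := seg_segOf k σ hx hm1 hm2
  have e2 := seg_segOf k σ hx' hm1' hm2'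
  rw [this] at e1
  omega

lemma lval_zero (k : ℕ) (σ : Equiv.Perm (Fin k)) : lvalS k σ 0 = 0 := by
  unfold lvalS
  rw [einv_zero]
  omega

lemma lval_pos (k : ℕ) (σ : Equiv.Perm (Fin k)) {i : ℕ} (hi : i ∈ bps k σ) :
    0 < lvalS k σ i := by
  rcases Nat.eq_zero_or_pos (lvalS k σ i) with h | h
  · exfalso
    have : i = 0 := lval_inj k σ (Finset.mem_insert_of_mem hi) (Finset.mem_insert_self 0 _)
      (by rw [h, lval_zero])
    rw [this] at hi
    exact zero_not_mem_bps k σ hi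
  · exact h

lemma seg_below (k : ℕ) (σ : Equiv.Perm (Fin k)) {x i : ℕ} (hx : x ∈ insert 0 (bps k σ))
    (hi : i ∈ insert 0 (bps k σ)) (hlt : lvalS k σ x < lvalS k σ i) :
    ∀ j, x ≤ j → j ≤ lastS k σ x → extPermInv k σ j < lvalS k σ i := by
  have htop : (lvalS k σ x : ℤ) + ((lastS k σ x : ℤ) - x) < (lvalS k σ i : ℤ) := by
    by_contra hcon
    push_neg at hcon
    obtain ⟨j', hj1, hj2, hj3⟩ := seg_attain k σ hx (le_of_lt hlt) hcon
    obtain ⟨m, hm1, hm2, hm3⟩ := lval_attained k σ hi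
    have : j' = m := einv_inj k σ (by rw [hj3, hm3])
    have e1 := seg_segOf k σ hx hj1 hj2
    have e2 := seg_segOf k σ hi hm1 hm2
    rw [this] at e1
    have hxi : x = i := by omega
    rw [hxi] at hlt
    omega
  intro j h1 h2
  have := (seg_range k σ hx h1 h2).2
  omega

lemma mono_seg (k : ℕ) (σ : Equiv.Perm (Fin k)) {j i : ℕ} (hj : j ≤ k + 1)
    (hi : i ∈ insert 0 (bps k σ)) :
    extPermInv k σ j < lvalS k σ i ↔ lvalS k σ (segOf k σ j) < lvalS k σ i := by
  have hsm := segOf_mem k σ j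
  have h1 := segOf_le k σ j
  have h2 : j ≤ lastS k σ (segOf k σ j) := by
    have := lt_nxt_segOf k σ hj
    unfold lastS; omega
  constructor
  · intro h
    have := (seg_range k σ hsm h1 h2).1
    omega
  · intro h
    exact seg_below k σ hsm hi (by omega) j h1 h2

end DegAux
namespace DegAux

noncomputable def lenS (k : ℕ) (σ : Equiv.Perm (Fin k)) (x : ℕ) : ℕ := nxt k σ x - x

noncomputable def rankS (k : ℕ) (σ : Equiv.Perm (Fin k)) (i : ℕ) : ℕ :=
  ((bps k σ).filter (fun i' => lvalS k σ i' < lvalS k σ i)).card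

lemma lval_le (k : ℕ) (σ : Equiv.Perm (Fin k)) {x : ℕ} (hx : x ∈ insert 0 (bps k σ)) :
    lvalS k σ x ≤ k + 1 := by
  obtain ⟨m, hm1, hm2, hm3⟩ := lval_attained k σ hx
  rw [← hm3]
  exact einv_le k σ (by have := lastS_le k σ x; omega)

lemma lformula (k : ℕ) (σ : Equiv.Perm (Fin k)) {i : ℕ} (hi : i ∈ insert 0 (bps k σ)) :
    lvalS k σ i =
      ∑ x ∈ (insert 0 (bps k σ)).filter (fun x => lvalS k σ x < lvalS k σ i), lenS k σ x := by
  classical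
  set L := lvalS k σ i with hL
  set A := (Finset.Icc 0 (k+1)).filter (fun j => extPermInv k σ j < L) with hA
  have himg : A.image (extPermInv k σ) = (Finset.Icc 0 (k+1)).filter (fun y => y < L) := by
    ext y
    simp only [Finset.mem_image, hA, Finset.mem_filter, Finset.mem_Icc]
    constructor
    · rintro ⟨j, ⟨⟨_, hj2⟩, hj3⟩, rfl⟩
      exact ⟨⟨Nat.zero_le _, einv_le k σ hj2⟩, hj3⟩
    · rintro ⟨⟨_, hy2⟩, hy3⟩
      refine ⟨extPerm k σ y, ⟨⟨Nat.zero_le _, eperm_le k σ hy2⟩, ?_⟩, extPermInv_extPerm k σ y⟩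
      rw [extPermInv_extPerm]; exact hy3
  have hcardA : A.card = L := by
    have h1 : A.card = (A.image (extPermInv k σ)).card :=
      (Finset.card_image_of_injective A (einv_inj k σ)).symm
    rw [h1, himg]
    have : (Finset.Icc 0 (k+1)).filter (fun y => y < L) = Finset.Ico 0 L := by
      ext y
      simp only [Finset.mem_filter, Finset.mem_Icc, Finset.mem_Ico]
      have : L ≤ k + 1 := lval_le k σ hi
      omega
    rw [this]
    simp
  have hAbi : A = ((insert 0 (bps k σ)).filter (fun x => lvalS k σ x < L)).biUnion
      (fun x => Finset.Ico x (nxt k σ x)) := by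
    ext j
    simp only [Finset.mem_biUnion, Finset.mem_filter, Finset.mem_Icc, Finset.mem_Ico, hA]
    constructor
    · rintro ⟨⟨_, hj2⟩, hj3⟩
      refine ⟨segOf k σ j, ⟨segOf_mem k σ j, ?_⟩, segOf_le k σ j, lt_nxt_segOf k σ hj2⟩
      exact (mono_seg k σ hj2 hi).1 hj3
    · rintro ⟨x, ⟨hx, hxL⟩, hxj, hjx⟩
      have hj2 : j ≤ k + 1 := by have := nxt_le k σ x; omega
      have hseg : segOf k σ j = x := seg_segOf k σ hx hxj (by unfold lastS; omega)
      refine ⟨⟨Nat.zero_le _, hj2⟩, ?_⟩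
      rw [mono_seg k σ hj2 hi, hseg]
      exact hxL
  have hdisj : ∀ x ∈ (insert 0 (bps k σ)).filter (fun x => lvalS k σ x < L), ∀ x' ∈
      (insert 0 (bps k σ)).filter (fun x => lvalS k σ x < L), x ≠ x' →
      Disjoint (Finset.Ico x (nxt k σ x)) (Finset.Ico x' (nxt k σ x')) := by
    intro x hx x' hx' hne
    simp only [Finset.mem_filter] at hx hx'
    rw [Finset.disjoint_left]
    intro j hj hj'
    simp only [Finset.mem_Ico] at hj hj'
    have e1 : segOf k σ j = x := seg_segOf k σ hx.1 hj.1 (by unfold lastS; omega)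
    have e2 : segOf k σ j = x' := seg_segOf k σ hx'.1 hj'.1 (by unfold lastS; omega)
    omega
  rw [hAbi, Finset.card_biUnion hdisj] at hcardA
  have hsum : ∑ x ∈ (insert 0 (bps k σ)).filter (fun x => lvalS k σ x < L),
      (Finset.Ico x (nxt k σ x)).card =
      ∑ x ∈ (insert 0 (bps k σ)).filter (fun x => lvalS k σ x < L), lenS k σ x :=
    Finset.sum_congr rfl fun x _ => by rw [Nat.card_Ico]; rfl
  omega

lemma rank_mono (k : ℕ) (σ : Equiv.Perm (Fin k)) {i i' : ℕ}
    (hi' : i' ∈ bps k σ) (h : lvalS k σ i' < lvalS k σ i) : rankS k σ i' < rankS k σ i := by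
  classical
  apply Finset.card_lt_card
  constructor
  · intro x hx
    simp only [Finset.mem_filter] at hx ⊢
    exact ⟨hx.1, lt_trans hx.2 h⟩
  · intro hsub
    have : i' ∈ (bps k σ).filter (fun x => lvalS k σ x < lvalS k σ i') :=
      hsub (Finset.mem_filter.2 ⟨hi', h⟩)
    simp only [Finset.mem_filter] at this
    omega

lemma rank_iff (k : ℕ) (σ : Equiv.Perm (Fin k)) {i i' : ℕ} (hi : i ∈ bps k σ)
    (hi' : i' ∈ bps k σ) : lvalS k σ i' < lvalS k σ i ↔ rankS k σ i' < rankS k σ i := by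
  constructor
  · exact rank_mono k σ hi'
  · intro h
    by_contra hcon
    push_neg at hcon
    rcases Nat.eq_or_lt_of_le hcon with heq | hlt
    · have : i = i' := lval_inj k σ (Finset.mem_insert_of_mem hi)
        (Finset.mem_insert_of_mem hi') heq
      rw [this] at h
      omega
    · have := rank_mono k σ hi hlt
      omega

end DegAux
namespace DegAux

lemma lformula2 (k : ℕ) (σ : Equiv.Perm (Fin k)) {i : ℕ} (hi : i ∈ bps k σ) :
    lvalS k σ i = lenS k σ 0 +
      ∑ x ∈ (bps k σ).filter (fun x => rankS k σ x < rankS k σ i), lenS k σ x := by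
  classical
  have h0 := lformula k σ (Finset.mem_insert_of_mem hi)
  have hins : (insert 0 (bps k σ)).filter (fun x => lvalS k σ x < lvalS k σ i) =
      insert 0 ((bps k σ).filter (fun x => lvalS k σ x < lvalS k σ i)) := by
    rw [Finset.filter_insert, if_pos]
    rw [lval_zero]
    exact lval_pos k σ hi
  rw [hins, Finset.sum_insert (by
    intro hmem
    exact zero_not_mem_bps k σ (Finset.mem_of_mem_filter _ hmem))] at h0
  rw [h0]
  congr 1
  apply Finset.sum_congr _ (fun _ _ => rfl)
  apply Finset.filter_congr
  intro x hx
  simpa using rank_iff k σ hi hx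

lemma upB_zero_iff (k : ℕ) (σ : Equiv.Perm (Fin k)) : upB k σ 0 = true ↔ nxt k σ 0 ≠ 1 := by
  have h1 : extPermInv k σ (lastS k σ 0) = 0 ↔ lastS k σ 0 = 0 := einv_eq_zero_iff k σ
  have h2 : 0 < nxt k σ 0 := lt_nxt k σ (by omega)
  simp only [upB, decide_eq_true_eq, einv_zero]
  unfold lastS at *
  omega

lemma einv_val (k : ℕ) (σ : Equiv.Perm (Fin k)) (m : Fin k) :
    extPermInv k σ (m.val + 1) = (σ⁻¹ m).val + 1 := by
  have hm := m.isLt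
  unfold extPermInv
  rw [dif_pos (by omega)]
  have hfin : (⟨m.val + 1 - 1, by omega⟩ : Fin k) = m := by apply Fin.ext; simp
  rw [hfin]

noncomputable def codeF (k : ℕ) (σ : Equiv.Perm (Fin k)) : Finset (ℕ × Bool × ℕ) :=
  (bps k σ).image (fun i => (i, upB k σ i, rankS k σ i))

lemma code_inj (k : ℕ) (σ σ' : Equiv.Perm (Fin k)) (h : codeF k σ = codeF k σ') : σ = σ' := by
  classical
  -- bps equal
  have hbps : bps k σ = bps k σ' := by
    have h1 : (codeF k σ).image Prod.fst = bps k σ := by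
      ext x; simp [codeF]
    have h2 : (codeF k σ').image Prod.fst = bps k σ' := by
      ext x; simp [codeF]
    rw [← h1, ← h2, h]
  -- component data equal
  have hdata : ∀ i ∈ bps k σ, upB k σ i = upB k σ' i ∧ rankS k σ i = rankS k σ' i := by
    intro i hi
    have hmem : (i, upB k σ i, rankS k σ i) ∈ codeF k σ' := by
      rw [← h]
      exact Finset.mem_image_of_mem _ hi
    unfold codeF at hmem
    rw [Finset.mem_image] at hmem
    obtain ⟨i', _, heq⟩ := hmem
    have h1 : i' = i := congrArg Prod.fst heq
    have h2 := congrArg Prod.snd heq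
    rw [h1] at h2
    exact ⟨(congrArg Prod.fst h2).symm, (congrArg Prod.snd h2).symm⟩
  have hnxt : ∀ x, nxt k σ x = nxt k σ' x := by
    intro x; unfold nxt; rw [hbps]
  have hlast : ∀ x, lastS k σ x = lastS k σ' x := by
    intro x; unfold lastS; rw [hnxt]
  have hlen : ∀ x, lenS k σ x = lenS k σ' x := by
    intro x; unfold lenS; rw [hnxt]
  have hsegOf : ∀ j, segOf k σ j = segOf k σ' j := by
    intro j; unfold segOf; congr 1; rw [hbps]
  -- lval equal on insert 0 bps
  have hlval : ∀ x ∈ insert 0 (bps k σ), lvalS k σ x = lvalS k σ' x := by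
    intro x hx
    rcases Finset.mem_insert.1 hx with h0 | hxb
    · rw [h0, lval_zero, lval_zero]
    · rw [lformula2 k σ hxb, lformula2 k σ' (hbps ▸ hxb)]
      have hfilt : (bps k σ).filter (fun x' => rankS k σ x' < rankS k σ x) =
          (bps k σ').filter (fun x' => rankS k σ' x' < rankS k σ' x) := by
        rw [← hbps]
        apply Finset.filter_congr
        intro y hy
        rw [(hdata y hy).2, (hdata x hxb).2]
      rw [hfilt, hlen 0]
      congr 1
      apply Finset.sum_congr rfl
      intro y _
      rw [hlen]
  -- upB equal on insert 0 bps
  have hup : ∀ x ∈ insert 0 (bps k σ), upB k σ x = upB k σ' x := by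
    intro x hx
    rcases Finset.mem_insert.1 hx with h0 | hxb
    · rw [h0]
      have hz : (upB k σ 0 = true) ↔ (upB k σ' 0 = true) := by
        rw [upB_zero_iff, upB_zero_iff, hnxt]
      cases hb1 : upB k σ 0 <;> cases hb2 : upB k σ' 0
      · rfl
      · exact absurd (hz.mpr hb2) (by rw [hb1]; simp)
      · exact absurd (hz.mp hb1) (by rw [hb2]; simp)
      · rfl
    · exact (hdata x hxb).1
  -- extPermInv equal up to k+1
  have hfeq : ∀ j, j ≤ k + 1 → extPermInv k σ j = extPermInv k σ' j := by
    intro j hj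
    have hsm := segOf_mem k σ j
    have h1 := segOf_le k σ j
    have h2 : j ≤ lastS k σ (segOf k σ j) := by
      have := lt_nxt_segOf k σ hj
      unfold lastS
      omega
    have hf1 := seg_fmla k σ hsm j h1 h2
    have hsm' : segOf k σ' j ∈ insert 0 (bps k σ') := segOf_mem k σ' j
    have hf2 := seg_fmla k σ' hsm' j (by rw [← hsegOf]; exact h1)
      (by rw [← hsegOf]; rw [← hlast]; exact h2)
    rw [← hsegOf j] at hf2
    rw [← hup _ hsm, ← hlval _ hsm, ← hlast] at hf2
    have : (extPermInv k σ j : ℤ) = (extPermInv k σ' j : ℤ) := by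
      rw [hf1, hf2]
    exact_mod_cast this
  -- conclude
  have hinv : σ⁻¹ = σ'⁻¹ := by
    apply Equiv.ext
    intro m
    have hm := m.isLt
    have := hfeq (m.val + 1) (by omega)
    rw [einv_val, einv_val] at this
    apply Fin.ext
    omega
  exact inv_injective hinv

end DegAux
namespace DegAux

lemma codeF_card (k : ℕ) (σ : Equiv.Perm (Fin k)) : (codeF k σ).card = (bps k σ).card := by
  unfold codeF
  apply Finset.card_image_of_injective
  intro a b hab
  exact congrArg Prod.fst hab

lemma count_le (k d : ℕ) :
    (Finset.univ.filter fun σ : Equiv.Perm (Fin k) => degree k σ = d).card ≤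
      (((k+1) * (2 * (d+1))).choose d) := by
  classical
  set bigB : Finset (ℕ × Bool × ℕ) :=
    (Finset.Icc 1 (k+1)) ×ˢ ((Finset.univ : Finset Bool) ×ˢ Finset.range (d+1)) with hbigB
  have hcard : bigB.card = (k+1) * (2 * (d+1)) := by
    rw [hbigB, Finset.card_product, Finset.card_product]
    simp [Nat.card_Icc]
  have h : (Finset.univ.filter fun σ : Equiv.Perm (Fin k) => degree k σ = d).card ≤
      (Finset.powersetCard d bigB).card := by
    apply Finset.card_le_card_of_injOn (codeF k) ?_ ?_
    · intro σ hσ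
      simp only [Finset.mem_coe, Finset.mem_filter] at hσ ⊢
      rw [Finset.mem_powersetCard]
      constructor
      · intro p hp
        unfold codeF at hp
        rw [Finset.mem_image] at hp
        obtain ⟨i, hi, rfl⟩ := hp
        rw [hbigB]
        simp only [Finset.mem_product, Finset.mem_univ, Finset.mem_range, true_and]
        refine ⟨bps_subset k σ hi, ?_⟩
        have : rankS k σ i ≤ (bps k σ).card := Finset.card_le_card (Finset.filter_subset _ _)
        rw [card_bps, hσ.2] at this
        omega
      · rw [codeF_card, card_bps, hσ.2]
    · intro σ hσ σ' hσ' hcode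
      exact code_inj k σ σ' hcode
  rw [Finset.card_powersetCard, hcard] at h
  exact h

lemma fact_bound : ∀ d : ℕ, ((d:ℝ)+1)^d ≤ (Nat.factorial d) * 8^d := by
  intro d
  induction d with
  | zero => simp
  | succ d ih =>
    have hd1 : (0:ℝ) < (d:ℝ) + 1 := by positivity
    have key : ((d:ℝ)+2)^(d+1) ≤ 3 * ((d:ℝ)+1)^(d+1) := by
      have h1 : ((d:ℝ)+2) = (1 + 1/((d:ℝ)+1)) * ((d:ℝ)+1) := by field_simp; ring
      have h2 : (1 + 1/((d:ℝ)+1)) ≤ Real.exp (1/((d:ℝ)+1)) := by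
        have := Real.add_one_le_exp (1/((d:ℝ)+1))
        linarith
      have h3 : (1 + 1/((d:ℝ)+1))^(d+1) ≤ Real.exp (1/((d:ℝ)+1))^(d+1) := by
        apply pow_le_pow_left₀ (by positivity) h2
      have h4 : Real.exp (1/((d:ℝ)+1))^(d+1) = Real.exp 1 := by
        rw [← Real.exp_nat_mul]
        congr 1
        field_simp
        push_cast
        ring
      have h5 : Real.exp 1 < 3 := by
        have := Real.exp_one_lt_d9
        linarith
      calc ((d:ℝ)+2)^(d+1) = (1 + 1/((d:ℝ)+1))^(d+1) * ((d:ℝ)+1)^(d+1) := by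
            rw [h1, mul_pow]
        _ ≤ Real.exp 1 * ((d:ℝ)+1)^(d+1) := by
            apply mul_le_mul_of_nonneg_right (h3.trans (le_of_eq h4)) (by positivity)
        _ ≤ 3 * ((d:ℝ)+1)^(d+1) := by
            apply mul_le_mul_of_nonneg_right (le_of_lt h5) (by positivity)
    have step : ((d:ℝ)+1)^(d+1) ≤ ((d:ℝ)+1) * (Nat.factorial d * 8^d) := by
      rw [pow_succ]
      calc ((d:ℝ)+1)^d * ((d:ℝ)+1) ≤ (Nat.factorial d * 8^d) * ((d:ℝ)+1) := by
            apply mul_le_mul_of_nonneg_right ih (by positivity)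
        _ = ((d:ℝ)+1) * (Nat.factorial d * 8^d) := by ring
    have hfact : (Nat.factorial (d+1) : ℝ) = ((d:ℝ)+1) * Nat.factorial d := by
      rw [Nat.factorial_succ]
      push_cast
      ring
    have : ((d:ℝ)+1+1)^(d+1) = ((d:ℝ)+2)^(d+1) := by ring_nf
    push_cast
    rw [this, hfact]
    calc ((d:ℝ)+2)^(d+1) ≤ 3 * ((d:ℝ)+1)^(d+1) := key
      _ ≤ 3 * (((d:ℝ)+1) * (Nat.factorial d * 8^d)) := by
          apply mul_le_mul_of_nonneg_left step (by norm_num)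
      _ ≤ (((d:ℝ)+1) * Nat.factorial d) * 8^(d+1) := by
          rw [pow_succ]
          have h8 : (0:ℝ) ≤ 8^d := by positivity
          have hf : (0:ℝ) ≤ (Nat.factorial d : ℝ) := by positivity
          nlinarith [hd1]

lemma choose_bound (k d : ℕ) (hk : 1 ≤ k) :
    ((((k+1) * (2 * (d+1))).choose d : ℕ) : ℝ) ≤ (32 * (k:ℝ))^d := by
  have h1 : ((((k+1) * (2 * (d+1))).choose d : ℕ) : ℝ) ≤
      (((k+1) * (2 * (d+1)) : ℕ) : ℝ)^d / (Nat.factorial d : ℝ) :=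
    Nat.choose_le_pow_div d ((k+1) * (2 * (d+1)))
  have hk1 : ((k:ℝ)+1) ≤ 2 * k := by
    have : (1:ℝ) ≤ (k:ℝ) := by exact_mod_cast hk
    linarith
  have hbase : (((k+1) * (2 * (d+1)) : ℕ) : ℝ) ≤ (4 * k) * ((d:ℝ)+1) := by
    push_cast
    nlinarith [Nat.cast_nonneg (α := ℝ) d, Nat.cast_nonneg (α := ℝ) k]
  have hpow : (((k+1) * (2 * (d+1)) : ℕ) : ℝ)^d ≤ ((4 * k) * ((d:ℝ)+1))^d := by
    apply pow_le_pow_left₀ (by positivity) hbase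
  have hsplit : ((4 * (k:ℝ)) * ((d:ℝ)+1))^d = (4*(k:ℝ))^d * ((d:ℝ)+1)^d := mul_pow _ _ _
  have h2 : ((4*(k:ℝ))^d * ((d:ℝ)+1)^d) ≤ (4*(k:ℝ))^d * (Nat.factorial d * 8^d) := by
    apply mul_le_mul_of_nonneg_left (fact_bound d) (by positivity)
  have h3 : (4*(k:ℝ))^d * (Nat.factorial d * 8^d) = Nat.factorial d * (32 * (k:ℝ))^d := by
    have h48 : (4:ℝ)^d * 8^d = 32^d := by rw [← mul_pow]; norm_num
    rw [mul_pow, mul_pow, ← h48]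
    ring
  have hfpos : (0:ℝ) < Nat.factorial d := by positivity
  calc ((((k+1) * (2 * (d+1))).choose d : ℕ) : ℝ)
      ≤ (((k+1) * (2 * (d+1)) : ℕ) : ℝ)^d / (Nat.factorial d : ℝ) := h1
    _ ≤ (Nat.factorial d * (32 * (k:ℝ))^d) / (Nat.factorial d : ℝ) := by
        gcongr
        calc (((k+1) * (2 * (d+1)) : ℕ) : ℝ)^d ≤ (4*(k:ℝ))^d * ((d:ℝ)+1)^d := by
              rw [← hsplit]; exact_mod_cast hpow
          _ ≤ (4*(k:ℝ))^d * (Nat.factorial d * 8^d) := h2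
          _ = Nat.factorial d * (32 * (k:ℝ))^d := h3
    _ = (32 * (k:ℝ))^d := by
        field_simp

end DegAux
/-- There is a constant `C > 0` such that for all `k ≥ 1` and all `d`, the number of
permutations of `{1,…,k}` of degree `d` is at most `(C k)^d`. -/
theorem card_degree_eq_le :
    ∃ C : ℝ, 0 < C ∧ ∀ k : ℕ, 1 ≤ k → ∀ d : ℕ,
      ((Finset.univ.filter fun σ : Equiv.Perm (Fin k) => degree k σ = d).card : ℝ) ≤
        (C * k) ^ d := by
  refine ⟨32, by norm_num, ?_⟩
  intro k hk d
  calc ((Finset.univ.filter fun σ : Equiv.Perm (Fin k) => degree k σ = d).card : ℝ)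
      ≤ ((((k+1) * (2 * (d+1))).choose d : ℕ) : ℝ) := by
        exact_mod_cast DegAux.count_le k d
    _ ≤ (32 * (k:ℝ))^d := DegAux.choose_bound k d hk
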